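/- arXiv:2602.10563 — 2 statements merged into one kernel-verified Lean document; each statement's English description precedes it below -/
import Mathlib

section
/- Let γ > 0 and ω > 0 with γ² ≠ 4ω². Then for every E ∈ ℝ, the function t ↦ e^{−iEt} S(t) is integrable on [0,∞) and ∫₀^∞ e^{−iEt} S(t) dt = 1/(−E² + iγE + ω²). (This identifies the retarded Green function in frequency space, Ĝ(E,p) = 1/(−E² + iγE + ω_δ(p)²).) -/
open MeasureTheory Set Filter

/-- `r₊ = (−γ + √(γ² − 4ω²))/2`, with the principal complex square root. -/
noncomputable def rPlus (γ ω : ℝ) : ℂ :=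
  (-(γ : ℂ) + ((γ : ℂ) ^ 2 - 4 * (ω : ℂ) ^ 2) ^ ((1 : ℂ) / 2)) / 2

/-- `r₋ = (−γ − √(γ² − 4ω²))/2`, with the principal complex square root. -/
noncomputable def rMinus (γ ω : ℝ) : ℂ :=
  (-(γ : ℂ) - ((γ : ℂ) ^ 2 - 4 * (ω : ℂ) ^ 2) ^ ((1 : ℂ) / 2)) / 2

/-- The kernel `S(t) = (e^{r₊ t} − e^{r₋ t})/(r₊ − r₋)`. -/
noncomputable def Sker (γ ω : ℝ) (t : ℝ) : ℂ :=
  (Complex.exp (rPlus γ ω * t) - Complex.exp (rMinus γ ω * t)) / (rPlus γ ω - rMinus γ ω)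

/-- The kernel `C(t) = (r₊ e^{r₋ t} − r₋ e^{r₊ t})/(r₊ − r₋)`. -/
noncomputable def Cker (γ ω : ℝ) (t : ℝ) : ℂ :=
  (rPlus γ ω * Complex.exp (rMinus γ ω * t) - rMinus γ ω * Complex.exp (rPlus γ ω * t)) /
    (rPlus γ ω - rMinus γ ω)

lemma cexp_integrableOn {c : ℂ} (hc : c.re < 0) :
    IntegrableOn (fun t : ℝ => Complex.exp (c * t)) (Ioi 0) := by
  refine Integrable.mono' (exp_neg_integrableOn_Ioi 0 (b := -c.re) (by linarith)) ?_ ?_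
  · exact (Complex.continuous_exp.comp (continuous_const.mul Complex.continuous_ofReal)
      ).aestronglyMeasurable
  · filter_upwards with t
    rw [Complex.norm_exp]
    simp [Complex.mul_re]

lemma cexp_integral {c : ℂ} (hc : c.re < 0) :
    ∫ t in Ioi (0:ℝ), Complex.exp (c * t) = -1 / c := by
  have hc0 : c ≠ 0 := fun h => by simp [h] at hc
  have hderiv : ∀ t : ℝ, HasDerivAt (fun s : ℝ => Complex.exp (c * s) / c)
      (Complex.exp (c * t)) t := by
    intro t
    have h1 : HasDerivAt (fun s : ℝ => c * (s : ℂ)) c t := by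
      simpa using (Complex.ofRealCLM.hasDerivAt (x := t)).const_mul c
    have h3 := h1.cexp.div_const c
    rw [show Complex.exp (c * t) * c / c = Complex.exp (c * t) by field_simp] at h3
    exact h3
  have htend : Tendsto (fun t : ℝ => Complex.exp (c * t) / c) atTop (nhds 0) := by
    rw [tendsto_zero_iff_norm_tendsto_zero]
    have : Tendsto (fun t : ℝ => Real.exp (c.re * t) / ‖c‖) atTop (nhds (0 / ‖c‖)) := by
      refine Tendsto.div_const ?_ _
      exact Real.tendsto_exp_atBot.comp (tendsto_id.const_mul_atTop_of_neg hc)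
    simpa [Complex.norm_exp, Complex.mul_re, norm_div] using this
  have := integral_Ioi_of_hasDerivAt_of_tendsto' (fun t _ => hderiv t)
    (cexp_integrableOn hc) htend
  simpa [neg_div] using this

lemma key_sq (γ ω : ℝ) (hne : γ ^ 2 ≠ 4 * ω ^ 2) :
    (((γ : ℂ) ^ 2 - 4 * (ω : ℂ) ^ 2) ^ ((1 : ℂ) / 2)) *
      (((γ : ℂ) ^ 2 - 4 * (ω : ℂ) ^ 2) ^ ((1 : ℂ) / 2)) = (γ : ℂ) ^ 2 - 4 * (ω : ℂ) ^ 2 := by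
  have hd : ((γ : ℂ) ^ 2 - 4 * (ω : ℂ) ^ 2) ≠ 0 := by
    intro h
    apply hne
    have : ((γ ^ 2 - 4 * ω ^ 2 : ℝ) : ℂ) = 0 := by push_cast; linear_combination h
    have := Complex.ofReal_eq_zero.mp this
    linarith
  rw [← Complex.cpow_add _ _ hd]
  norm_num

lemma sqrt_of_nonneg' {x : ℝ} (hx : 0 ≤ x) :
    ((x : ℂ)) ^ ((1 : ℂ) / 2) = (Real.sqrt x : ℂ) := by
  rw [show ((1:ℂ)/2) = ((1/2 : ℝ) : ℂ) by norm_num]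
  rw [← Complex.ofReal_cpow hx (1/2), Real.sqrt_eq_rpow]

lemma re_neg (γ ω : ℝ) (hγ : 0 < γ) (hω : 0 < ω) (hne : γ ^ 2 ≠ 4 * ω ^ 2) :
    (rPlus γ ω).re < 0 ∧ (rMinus γ ω).re < 0 := by
  have hcast : ((γ : ℂ) ^ 2 - 4 * (ω : ℂ) ^ 2) = ((γ ^ 2 - 4 * ω ^ 2 : ℝ) : ℂ) := by
    push_cast; ring
  set d : ℝ := γ ^ 2 - 4 * ω ^ 2 with hd
  rcases lt_or_gt_of_ne (fun h : d = 0 => hne (by linarith [hd ▸ h])) with hdneg | hdpos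
  · have hs : ((γ : ℂ) ^ 2 - 4 * (ω : ℂ) ^ 2) ^ ((1 : ℂ) / 2)
        = (Real.sqrt (-d) : ℂ) * Complex.I := by
      rw [hcast, Complex.ofReal_cpow_of_nonpos hdneg.le]
      rw [show (-(d:ℂ)) = ((-d : ℝ) : ℂ) by push_cast; ring, sqrt_of_nonneg' (by linarith)]
      rw [show (Real.pi : ℂ) * Complex.I * ((1:ℂ)/2) = ((Real.pi / 2 : ℝ) : ℂ) * Complex.I by
        push_cast; ring]
      rw [Complex.exp_mul_I, ← Complex.ofReal_cos, ← Complex.ofReal_sin]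
      norm_num
    constructor <;>
    · simp only [rPlus, rMinus, hs]
      simp [Complex.div_re, Complex.add_re, Complex.sub_re, Complex.mul_re]
      linarith
  · have hs : ((γ : ℂ) ^ 2 - 4 * (ω : ℂ) ^ 2) ^ ((1 : ℂ) / 2) = (Real.sqrt d : ℂ) := by
      rw [hcast, sqrt_of_nonneg' hdpos.le]
    have hlt : Real.sqrt d < γ := by
      rw [show γ = Real.sqrt (γ ^ 2) by rw [Real.sqrt_sq hγ.le]]
      apply Real.sqrt_lt_sqrt hdpos.le
      nlinarith
    have h0 : 0 ≤ Real.sqrt d := Real.sqrt_nonneg d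
    constructor <;>
    · simp only [rPlus, rMinus, hs]
      simp [Complex.div_re, Complex.add_re, Complex.sub_re]
      linarith

theorem retarded_green_function_frequency (γ ω : ℝ) (hγ : 0 < γ) (hω : 0 < ω)
    (hne : γ ^ 2 ≠ 4 * ω ^ 2) (E : ℝ) :
    MeasureTheory.IntegrableOn
        (fun t : ℝ => Complex.exp (-Complex.I * (E : ℂ) * (t : ℂ)) * Sker γ ω t)
        (Set.Ici 0) ∧
    (∫ t in Set.Ici (0:ℝ), Complex.exp (-Complex.I * (E : ℂ) * (t : ℂ)) * Sker γ ω t)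
      = 1 / (-(E : ℂ) ^ 2 + Complex.I * (γ : ℂ) * (E : ℂ) + (ω : ℂ) ^ 2) := by
  obtain ⟨hp, hm⟩ := re_neg γ ω hγ hω hne
  have hs2 := key_sq γ ω hne
  set s : ℂ := ((γ : ℂ) ^ 2 - 4 * (ω : ℂ) ^ 2) ^ ((1 : ℂ) / 2) with hsdef
  have hsub : rPlus γ ω - rMinus γ ω = s := by
    simp only [rPlus, rMinus, ← hsdef]; ring
  set cp := rPlus γ ω - Complex.I * (E : ℂ) with hcpdef
  set cm := rMinus γ ω - Complex.I * (E : ℂ) with hcmdef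
  have hIE : (Complex.I * (E : ℂ)).re = 0 := by simp
  have hcpre : cp.re < 0 := by rw [hcpdef, Complex.sub_re, hIE]; linarith
  have hcmre : cm.re < 0 := by rw [hcmdef, Complex.sub_re, hIE]; linarith
  have hcp0 : cp ≠ 0 := fun h => by rw [h] at hcpre; simp at hcpre
  have hcm0 : cm ≠ 0 := fun h => by rw [h] at hcmre; simp at hcmre
  have hs0 : s ≠ 0 := by
    intro h
    rw [h, mul_zero] at hs2
    apply hne
    have h2 : ((γ ^ 2 - 4 * ω ^ 2 : ℝ) : ℂ) = 0 := by push_cast; linear_combination -hs2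
    have := Complex.ofReal_eq_zero.mp h2
    linarith
  have e1 : ∀ (r : ℂ) (t : ℝ), Complex.exp (-Complex.I * (E : ℂ) * (t : ℂ)) *
      Complex.exp (r * t) = Complex.exp ((r - Complex.I * (E : ℂ)) * t) := by
    intro r t
    rw [← Complex.exp_add]
    congr 1
    ring
  have hfun : (fun t : ℝ => Complex.exp (-Complex.I * (E : ℂ) * (t : ℂ)) * Sker γ ω t)
      = fun t : ℝ => (Complex.exp (cp * t) - Complex.exp (cm * t)) / s := by
    funext t
    rw [Sker, hsub, ← mul_div_assoc, mul_sub, e1, e1, hcpdef, hcmdef]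
  have hintp := cexp_integrableOn hcpre
  have hintm := cexp_integrableOn hcmre
  constructor
  · rw [hfun]
    exact Iff.mpr integrableOn_Ici_iff_integrableOn_Ioi ((hintp.sub hintm).div_const s)
  · rw [hfun, integral_Ici_eq_integral_Ioi, integral_div, integral_sub hintp hintm,
      cexp_integral hcpre, cexp_integral hcmre]
    have hA : (-(E : ℂ) ^ 2 + Complex.I * (γ : ℂ) * (E : ℂ) + (ω : ℂ) ^ 2) = cp * cm := by
      rw [hcpdef, hcmdef]
      simp only [rPlus, rMinus, ← hsdef]
      linear_combination (1/4 : ℂ) * hs2 - ((E:ℂ)^2) * Complex.I_sq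
    have hsub2 : cp - cm = s := by rw [hcpdef, hcmdef, sub_sub_sub_cancel_right, hsub]
    rw [hA]
    field_simp
    linear_combination hsub2
end

section
/- Let d ≥ 1, γ > 0, B > 0, and suppose K_C, K_S : [0,∞) × ℤ^d → ℝ satisfy |K_C(t,x)| ≤ B e^{−γt/2}(1+‖x‖)^{−(d+1)} and |K_S(t,x)| ≤ B e^{−γt/2}(1+‖x‖)^{−(d+1)} for all t ≥ 0, x ∈ ℤ^d. Let f, g : ℤ^d → ℝ have finite weighted norms ‖f‖_{d+1}, ‖g‖_{d+1}, and let h : [0,∞) × ℤ^d → ℝ be such that s ↦ h(s,x) is measurable for each x and H(t) := sup_{0≤s≤t} ‖h(s,·)‖_{d+1} < ∞ for every t. Define φ(t,x) := ∑_y K_C(t,x−y) f(y) + ∑_y K_S(t,x−y) g(y) + ∫₀ᵗ ∑_y K_S(t−s, x−y) h(s,y) ds. Then there exists a constant A > 0 depending only on d and B such that for all t ≥ 0, ‖φ(t,·)‖_{d+1} ≤ A e^{−γt/2}( ‖f‖_{d+1} + ‖g‖_{d+1} ) + A ∫₀ᵗ e^{−γ(t−s)/2} ‖h(s,·)‖_{d+1}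 ds; in particular |φ(t,x)| ≤ ‖φ(t,·)‖_{d+1} (1+‖x‖)^{−(d+1)}. -/
open scoped BigOperators

/-- Euclidean norm of a lattice point `x ∈ ℤ^d` regarded as a point of `ℝ^d`. -/
noncomputable def euclNorm (d : ℕ) (x : Fin d → ℤ) : ℝ :=
  Real.sqrt (∑ j : Fin d, ((x j : ℝ)) ^ 2)

/-- The weighted norm `‖u‖_{d+1} = sup_{x∈ℤ^d} (1+‖x‖)^{d+1} |u(x)|` of the space `𝒳_{d+1}`. -/
noncomputable def wnorm (d : ℕ) (u : (Fin d → ℤ) → ℝ) : ℝ :=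
  ⨆ x : Fin d → ℤ, (1 + euclNorm d x) ^ (d + 1) * |u x|

/-- The Duhamel representation
`φ(t,x) = ∑_y K_C(t,x−y) f(y) + ∑_y K_S(t,x−y) g(y) + ∫₀ᵗ ∑_y K_S(t−s,x−y) h(s,y) ds`. -/
noncomputable def duhamelField (d : ℕ) (KC KS : ℝ → (Fin d → ℤ) → ℝ)
    (f g : (Fin d → ℤ) → ℝ) (h : ℝ → (Fin d → ℤ) → ℝ) (t : ℝ) (x : Fin d → ℤ) : ℝ :=
  (∑' y : Fin d → ℤ, KC t (x - y) * f y) + (∑' y : Fin d → ℤ, KS t (x - y) * g y) +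
    ∫ s in (0:ℝ)..t, ∑' y : Fin d → ℤ, KS (t - s) (x - y) * h s y

noncomputable def wt (d : ℕ) (x : Fin d → ℤ) : ℝ := (1 + euclNorm d x) ^ (d + 1)

lemma euclNorm_nonneg (d : ℕ) (x : Fin d → ℤ) : 0 ≤ euclNorm d x := Real.sqrt_nonneg _

lemma one_le_wt (d : ℕ) (x : Fin d → ℤ) : 1 ≤ wt d x :=
  one_le_pow₀ (by linarith [euclNorm_nonneg d x])

lemma wt_pos (d : ℕ) (x : Fin d → ℤ) : 0 < wt d x := lt_of_lt_of_le one_pos (one_le_wt d x)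

lemma euclNorm_eq_norm (d : ℕ) (x : Fin d → ℤ) :
    euclNorm d x = ‖(WithLp.equiv 2 (Fin d → ℝ)).symm (fun j => (x j : ℝ))‖ := by
  rw [EuclideanSpace.norm_eq]
  simp [euclNorm, sq_abs]

lemma euclNorm_triangle (d : ℕ) (x y : Fin d → ℤ) :
    euclNorm d x ≤ euclNorm d (x - y) + euclNorm d y := by
  rw [euclNorm_eq_norm, euclNorm_eq_norm, euclNorm_eq_norm]
  have h : (WithLp.equiv 2 (Fin d → ℝ)).symm (fun j => ((x j : ℝ)))
      = (WithLp.equiv 2 (Fin d → ℝ)).symm (fun j => (((x - y) j : ℝ)))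
        + (WithLp.equiv 2 (Fin d → ℝ)).symm (fun j => ((y j : ℝ))) := by
    rw [show ∀ a b : Fin d → ℝ, (WithLp.equiv 2 (Fin d → ℝ)).symm a + (WithLp.equiv 2 (Fin d → ℝ)).symm b
        = (WithLp.equiv 2 (Fin d → ℝ)).symm (a + b) from fun _ _ => rfl]
    congr 1
    funext j
    push_cast [Pi.sub_apply, Pi.add_apply]
    ring
  rw [h]; exact norm_add_le _ _

lemma abs_coord_le_euclNorm (d : ℕ) (x : Fin d → ℤ) (j : Fin d) :
    |(x j : ℝ)| ≤ euclNorm d x := by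
  rw [← Real.sqrt_sq_eq_abs]
  exact Real.sqrt_le_sqrt (Finset.single_le_sum (fun i _ => sq_nonneg ((x i : ℝ))) (Finset.mem_univ j))

set_option maxHeartbeats 1000000 in
lemma summable_prod_aux (c : ℤ → ℝ) (hc : Summable c) (hc0 : ∀ k, 0 ≤ c k) :
    ∀ n : ℕ, Summable (fun y : Fin n → ℤ => ∏ j, c (y j)) := by
  intro n
  induction n with
  | zero =>
    haveI : Finite (Fin 0 → ℤ) := Finite.of_subsingleton
    exact Summable.of_finite
  | succ n ih =>
    rw [← (Fin.consEquiv (fun _ : Fin (n + 1) => ℤ)).summable_iff]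
    have heq : ((fun y : Fin (n + 1) → ℤ => ∏ j, c (y j)) ∘ (Fin.consEquiv fun _ => ℤ))
        = fun p : ℤ × (Fin n → ℤ) => c p.1 * ∏ j, c (p.2 j) := by
      funext p
      simp [Fin.consEquiv, Fin.prod_univ_succ]
    rw [heq]
    exact Summable.mul_of_nonneg (f := c) (g := fun y : Fin n → ℤ => ∏ j, c (y j)) hc ih hc0
      (fun z => Finset.prod_nonneg fun j _ => hc0 _)

lemma summable_c (q : ℝ) (hq : 1 < q) :
    Summable (fun k : ℤ => ((1 + |(k : ℝ)|) ^ q)⁻¹) := by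
  have hnat : Summable (fun n : ℕ => ((1 + (n : ℝ)) ^ q)⁻¹) := by
    have h1 := (Real.summable_nat_rpow_inv (p := q)).mpr hq
    have h2 := (summable_nat_add_iff 1).mpr h1
    refine h2.congr fun n => ?_
    push_cast
    rw [add_comm]
  apply Summable.of_nat_of_neg
  · refine hnat.congr fun n => ?_
    simp
  · refine hnat.congr fun n => ?_
    simp

lemma summable_wt_inv (d : ℕ) (hd : 1 ≤ d) : Summable (fun y : Fin d → ℤ => (wt d y)⁻¹) := by
  have hd0 : (0:ℝ) < d := by exact_mod_cast hd
  set q : ℝ := (d + 1) / d with hqdef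
  have hq : 1 < q := (one_lt_div hd0).mpr (by linarith)
  have hc : Summable (fun k : ℤ => ((1 + |(k : ℝ)|) ^ q)⁻¹) := summable_c q hq
  refine Summable.of_nonneg_of_le (fun y => inv_nonneg.2 (wt_pos d y).le) ?_
    (summable_prod_aux _ hc (fun k => by positivity) d)
  intro y
  have h1 : ∀ j : Fin d, (0:ℝ) ≤ 1 + |(y j : ℝ)| := fun j => by positivity
  have hPpos : 0 < ∏ j, (1 + |(y j : ℝ)|) := Finset.prod_pos fun j _ => by positivity
  have hstep : (∏ j, (1 + |(y j : ℝ)|)) ^ q ≤ wt d y := by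
    calc (∏ j, (1 + |(y j : ℝ)|)) ^ q
        ≤ ((1 + euclNorm d y) ^ d) ^ q := by
          apply Real.rpow_le_rpow hPpos.le ?_ (le_of_lt (lt_trans one_pos hq))
          calc ∏ j, (1 + |(y j : ℝ)|) ≤ ∏ _j : Fin d, (1 + euclNorm d y) :=
                Finset.prod_le_prod (fun j _ => h1 j)
                  (fun j _ => by linarith [abs_coord_le_euclNorm d y j])
            _ = (1 + euclNorm d y) ^ d := by
                rw [Finset.prod_const, Finset.card_univ, Fintype.card_fin]
      _ = (1 + euclNorm d y) ^ (d + 1) := by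
          rw [← Real.rpow_natCast (1 + euclNorm d y) d,
            ← Real.rpow_mul (by linarith [euclNorm_nonneg d y])]
          rw [show (d:ℝ) * q = ((d+1:ℕ):ℝ) by rw [hqdef]; push_cast; field_simp]
          rw [Real.rpow_natCast]
      _ = wt d y := rfl
  calc (wt d y)⁻¹ ≤ ((∏ j, (1 + |(y j : ℝ)|)) ^ q)⁻¹ := by
        gcongr
    _ = ∏ j, ((1 + |(y j : ℝ)|) ^ q)⁻¹ := by
        rw [← Real.finset_prod_rpow _ _ (fun j _ => h1 j) q, ← Finset.prod_inv_distrib]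

lemma wt_inv_nonneg (d : ℕ) (x : Fin d → ℤ) : 0 ≤ (wt d x)⁻¹ := inv_nonneg.2 (wt_pos d x).le

lemma wt_conv_ptwise (d : ℕ) (x y : Fin d → ℤ) :
    (wt d (x - y))⁻¹ * (wt d y)⁻¹
      ≤ 2 ^ (d + 1) * (wt d x)⁻¹ * ((wt d (x - y))⁻¹ + (wt d y)⁻¹) := by
  have htri := euclNorm_triangle d x y
  have h1 := euclNorm_nonneg d (x - y)
  have h2 := euclNorm_nonneg d y
  have h0 := euclNorm_nonneg d x
  have ha := wt_pos d (x - y)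
  have hb := wt_pos d y
  have hc := wt_pos d x
  rcases le_total (euclNorm d (x - y)) (euclNorm d y) with hle | hle
  · have hcb : wt d x ≤ 2 ^ (d + 1) * wt d y := by
      have h3 : 1 + euclNorm d x ≤ 2 * (1 + euclNorm d y) := by linarith
      calc wt d x ≤ (2 * (1 + euclNorm d y)) ^ (d + 1) :=
            pow_le_pow_left₀ (by linarith) h3 _
        _ = 2 ^ (d + 1) * wt d y := by rw [mul_pow]; rfl
    have hkey : (wt d y)⁻¹ ≤ 2 ^ (d + 1) * (wt d x)⁻¹ := by
      have heq : 2 ^ (d + 1) * (wt d x)⁻¹ - (wt d y)⁻¹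
          = (2 ^ (d + 1) * wt d y - wt d x) * (wt d x)⁻¹ * (wt d y)⁻¹ := by
        field_simp
      nlinarith [mul_nonneg (mul_nonneg (sub_nonneg.2 hcb) (wt_inv_nonneg d x)) (wt_inv_nonneg d y)]
    calc (wt d (x - y))⁻¹ * (wt d y)⁻¹
        ≤ (wt d (x - y))⁻¹ * (2 ^ (d + 1) * (wt d x)⁻¹) :=
          mul_le_mul_of_nonneg_left hkey (wt_inv_nonneg d (x - y))
      _ = 2 ^ (d + 1) * (wt d x)⁻¹ * (wt d (x - y))⁻¹ := by ring
      _ ≤ 2 ^ (d + 1) * (wt d x)⁻¹ * ((wt d (x - y))⁻¹ + (wt d y)⁻¹) := by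
          apply mul_le_mul_of_nonneg_left (le_add_of_nonneg_right (wt_inv_nonneg d y))
          exact mul_nonneg (by positivity) (wt_inv_nonneg d x)
  · have hcb : wt d x ≤ 2 ^ (d + 1) * wt d (x - y) := by
      have h3 : 1 + euclNorm d x ≤ 2 * (1 + euclNorm d (x - y)) := by linarith
      calc wt d x ≤ (2 * (1 + euclNorm d (x - y))) ^ (d + 1) :=
            pow_le_pow_left₀ (by linarith) h3 _
        _ = 2 ^ (d + 1) * wt d (x - y) := by rw [mul_pow]; rfl
    have hkey : (wt d (x - y))⁻¹ ≤ 2 ^ (d + 1) * (wt d x)⁻¹ := by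
      have heq : 2 ^ (d + 1) * (wt d x)⁻¹ - (wt d (x - y))⁻¹
          = (2 ^ (d + 1) * wt d (x - y) - wt d x) * (wt d x)⁻¹ * (wt d (x - y))⁻¹ := by
        field_simp
      nlinarith [mul_nonneg (mul_nonneg (sub_nonneg.2 hcb) (wt_inv_nonneg d x)) (wt_inv_nonneg d (x - y))]
    calc (wt d (x - y))⁻¹ * (wt d y)⁻¹
        ≤ (2 ^ (d + 1) * (wt d x)⁻¹) * (wt d y)⁻¹ :=
          mul_le_mul_of_nonneg_right hkey (wt_inv_nonneg d y)
      _ = 2 ^ (d + 1) * (wt d x)⁻¹ * (wt d y)⁻¹ := by ring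
      _ ≤ 2 ^ (d + 1) * (wt d x)⁻¹ * ((wt d (x - y))⁻¹ + (wt d y)⁻¹) := by
          apply mul_le_mul_of_nonneg_left (le_add_of_nonneg_left (wt_inv_nonneg d (x - y)))
          exact mul_nonneg (by positivity) (wt_inv_nonneg d x)

lemma summable_shift (d : ℕ) (hd : 1 ≤ d) (x : Fin d → ℤ) :
    Summable (fun y : Fin d → ℤ => (wt d (x - y))⁻¹) :=
  ((Equiv.subLeft x).summable_iff (f := fun y : Fin d → ℤ => (wt d y)⁻¹)).mpr
    (summable_wt_inv d hd)

lemma tsum_shift (d : ℕ) (x : Fin d → ℤ) :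
    ∑' y : Fin d → ℤ, (wt d (x - y))⁻¹ = ∑' y : Fin d → ℤ, (wt d y)⁻¹ :=
  (Equiv.subLeft x).tsum_eq (fun y : Fin d → ℤ => (wt d y)⁻¹)

lemma conv_majorant_summable (d : ℕ) (hd : 1 ≤ d) (x : Fin d → ℤ) :
    Summable (fun y : Fin d → ℤ =>
      2 ^ (d + 1) * (wt d x)⁻¹ * ((wt d (x - y))⁻¹ + (wt d y)⁻¹)) :=
  ((summable_shift d hd x).add (summable_wt_inv d hd)).mul_left _

lemma conv_summable (d : ℕ) (hd : 1 ≤ d) (x : Fin d → ℤ) :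
    Summable (fun y : Fin d → ℤ => (wt d (x - y))⁻¹ * (wt d y)⁻¹) :=
  Summable.of_nonneg_of_le
    (fun y => mul_nonneg (wt_inv_nonneg d _) (wt_inv_nonneg d y))
    (fun y => wt_conv_ptwise d x y) (conv_majorant_summable d hd x)

lemma conv_tsum_le (d : ℕ) (hd : 1 ≤ d) (x : Fin d → ℤ) :
    ∑' y : Fin d → ℤ, (wt d (x - y))⁻¹ * (wt d y)⁻¹
      ≤ 2 ^ (d + 2) * (∑' y : Fin d → ℤ, (wt d y)⁻¹) * (wt d x)⁻¹ := by
  have h1 : ∑' y : Fin d → ℤ, (wt d (x - y))⁻¹ * (wt d y)⁻¹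
      ≤ ∑' y : Fin d → ℤ, 2 ^ (d + 1) * (wt d x)⁻¹ * ((wt d (x - y))⁻¹ + (wt d y)⁻¹) :=
    Summable.tsum_le_tsum (fun y => wt_conv_ptwise d x y) (conv_summable d hd x)
      (conv_majorant_summable d hd x)
  refine h1.trans (le_of_eq ?_)
  rw [tsum_mul_left, Summable.tsum_add (summable_shift d hd x) (summable_wt_inv d hd), tsum_shift d x,
    pow_succ]
  ring

lemma kernel_sum (d : ℕ) (hd : 1 ≤ d) (x : Fin d → ℤ) (k u : (Fin d → ℤ) → ℝ)
    (β M : ℝ) (hβ : 0 ≤ β) (hM : 0 ≤ M)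
    (hk : ∀ z, |k z| ≤ β * (wt d z)⁻¹) (hu : ∀ y, |u y| ≤ M * (wt d y)⁻¹) :
    |∑' y : Fin d → ℤ, k (x - y) * u y|
      ≤ β * M * (2 ^ (d + 2) * ∑' y : Fin d → ℤ, (wt d y)⁻¹) * (wt d x)⁻¹ := by
  have hpt : ∀ y : Fin d → ℤ, |k (x - y) * u y|
      ≤ (β * M) * ((wt d (x - y))⁻¹ * (wt d y)⁻¹) := by
    intro y
    rw [abs_mul]
    calc |k (x - y)| * |u y| ≤ (β * (wt d (x - y))⁻¹) * (M * (wt d y)⁻¹) :=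
        mul_le_mul (hk _) (hu _) (abs_nonneg _) (mul_nonneg hβ (wt_inv_nonneg d _))
      _ = (β * M) * ((wt d (x - y))⁻¹ * (wt d y)⁻¹) := by ring
  have hmsum := (conv_summable d hd x).mul_left (β * M)
  have habs : Summable (fun y : Fin d → ℤ => |k (x - y) * u y|) :=
    Summable.of_nonneg_of_le (fun y => abs_nonneg _) hpt hmsum
  have h1 : |∑' y : Fin d → ℤ, k (x - y) * u y| ≤ ∑' y : Fin d → ℤ, |k (x - y) * u y| := by
    simpa only [Real.norm_eq_abs] using
      norm_tsum_le_tsum_norm (f := fun y : Fin d → ℤ => k (x - y) * u y)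
        (by simpa only [Real.norm_eq_abs] using habs)
  calc |∑' y : Fin d → ℤ, k (x - y) * u y| ≤ ∑' y : Fin d → ℤ, |k (x - y) * u y| := h1
    _ ≤ ∑' y : Fin d → ℤ, (β * M) * ((wt d (x - y))⁻¹ * (wt d y)⁻¹) :=
        Summable.tsum_le_tsum hpt habs hmsum
    _ = (β * M) * ∑' y : Fin d → ℤ, (wt d (x - y))⁻¹ * (wt d y)⁻¹ := tsum_mul_left
    _ ≤ (β * M) * (2 ^ (d + 2) * (∑' y : Fin d → ℤ, (wt d y)⁻¹) * (wt d x)⁻¹) :=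
        mul_le_mul_of_nonneg_left (conv_tsum_le d hd x) (mul_nonneg hβ hM)
    _ = β * M * (2 ^ (d + 2) * ∑' y : Fin d → ℤ, (wt d y)⁻¹) * (wt d x)⁻¹ := by ring

lemma wnorm_nonneg (d : ℕ) (u : (Fin d → ℤ) → ℝ)
    (hb : BddAbove (Set.range fun x : Fin d → ℤ => wt d x * |u x|)) : 0 ≤ wnorm d u :=
  le_trans (mul_nonneg (wt_pos d (fun _ => 0)).le (abs_nonneg _))
    (le_ciSup hb (fun _ => 0))

lemma abs_le_wnorm (d : ℕ) (u : (Fin d → ℤ) → ℝ)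
    (hb : BddAbove (Set.range fun x : Fin d → ℤ => wt d x * |u x|)) (y : Fin d → ℤ) :
    |u y| ≤ wnorm d u * (wt d y)⁻¹ := by
  have h := le_ciSup hb y
  have hw := wt_pos d y
  calc |u y| = (wt d y * |u y|) * (wt d y)⁻¹ := by
        rw [mul_comm (wt d y) |u y|, mul_assoc, mul_inv_cancel₀ hw.ne', mul_one]
    _ ≤ wnorm d u * (wt d y)⁻¹ := mul_le_mul_of_nonneg_right h (wt_inv_nonneg d y)

theorem duhamel_weighted_estimate (d : ℕ) (hd : 1 ≤ d) (B : ℝ) (hB : 0 < B) :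
    ∃ A : ℝ, 0 < A ∧
      ∀ (γ : ℝ), 0 < γ →
      ∀ (KC KS : ℝ → (Fin d → ℤ) → ℝ),
        (∀ t : ℝ, 0 ≤ t → ∀ x : Fin d → ℤ,
          |KC t x| ≤ B * Real.exp (-(γ * t) / 2) * ((1 + euclNorm d x) ^ (d + 1))⁻¹) →
        (∀ t : ℝ, 0 ≤ t → ∀ x : Fin d → ℤ,
          |KS t x| ≤ B * Real.exp (-(γ * t) / 2) * ((1 + euclNorm d x) ^ (d + 1))⁻¹) →
      ∀ (f g : (Fin d → ℤ) → ℝ),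
        BddAbove (Set.range fun x : Fin d → ℤ => (1 + euclNorm d x) ^ (d + 1) * |f x|) →
        BddAbove (Set.range fun x : Fin d → ℤ => (1 + euclNorm d x) ^ (d + 1) * |g x|) →
      ∀ (h : ℝ → (Fin d → ℤ) → ℝ),
        (∀ x : Fin d → ℤ, Measurable fun s : ℝ => h s x) →
        (∀ s : ℝ, 0 ≤ s →
          BddAbove (Set.range fun x : Fin d → ℤ => (1 + euclNorm d x) ^ (d + 1) * |h s x|)) →
        (∀ t : ℝ, 0 ≤ t → BddAbove ((fun s : ℝ => wnorm d (h s)) '' Set.Icc 0 t)) →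
      ∀ t : ℝ, 0 ≤ t →
        wnorm d (duhamelField d KC KS f g h t)
            ≤ A * Real.exp (-(γ * t) / 2) * (wnorm d f + wnorm d g)
              + A * ∫ s in (0:ℝ)..t, Real.exp (-(γ * (t - s)) / 2) * wnorm d (h s) ∧
        ∀ x : Fin d → ℤ,
          |duhamelField d KC KS f g h t x|
            ≤ wnorm d (duhamelField d KC KS f g h t) * ((1 + euclNorm d x) ^ (d + 1))⁻¹ := by
  classical
  have hSsum := summable_wt_inv d hd
  have hSpos : 0 < ∑' y : Fin d → ℤ, (wt d y)⁻¹ :=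
    Summable.tsum_pos hSsum (fun y => wt_inv_nonneg d y) (fun _ => 0) (inv_pos.2 (wt_pos d _))
  refine ⟨B * (2 ^ (d + 2) * ∑' y : Fin d → ℤ, (wt d y)⁻¹), by positivity, ?_⟩
  intro γ hγ KC KS hKC hKS f g hf hg h hmeas hbd hbd2 t ht
  set S : ℝ := ∑' y : Fin d → ℤ, (wt d y)⁻¹ with hS
  set A : ℝ := B * (2 ^ (d + 2) * S) with hA
  have hApos : 0 < A := by rw [hA]; positivity
  set J : ℝ := ∫ s in (0:ℝ)..t, Real.exp (-(γ * (t - s)) / 2) * wnorm d (h s) with hJ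
  have hwf : 0 ≤ wnorm d f := wnorm_nonneg d f hf
  have hwg : 0 ≤ wnorm d g := wnorm_nonneg d g hg
  have hwmeas : Measurable (fun s : ℝ => wnorm d (h s)) := by
    apply Measurable.iSup
    intro x
    exact ((hmeas x).abs.const_mul _)
  have hintJ : IntervalIntegrable (fun s : ℝ => Real.exp (-(γ * (t - s)) / 2) * wnorm d (h s))
      MeasureTheory.volume 0 t := by
    obtain ⟨Mt, hMt⟩ := hbd2 t ht
    rw [intervalIntegrable_iff]
    apply MeasureTheory.Measure.integrableOn_of_bounded (M := max Mt 0)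
    · rw [Set.uIoc_of_le ht]; exact measure_Ioc_lt_top.ne
    · exact ((Real.measurable_exp.comp (by fun_prop)).mul hwmeas).aestronglyMeasurable
    · rw [Set.uIoc_of_le ht]
      refine (MeasureTheory.ae_restrict_iff' measurableSet_Ioc).mpr (.of_forall fun s hs => ?_)
      have hs0 : 0 ≤ s := hs.1.le
      have hwnn : 0 ≤ wnorm d (h s) := wnorm_nonneg d (h s) (hbd s hs0)
      have hws : wnorm d (h s) ≤ Mt := hMt (Set.mem_image_of_mem _ ⟨hs0, hs.2⟩)
      have he : Real.exp (-(γ * (t - s)) / 2) ≤ 1 := by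
        rw [Real.exp_le_one_iff]
        nlinarith [hs.2, hγ.le]
      rw [Real.norm_eq_abs, abs_of_nonneg (mul_nonneg (Real.exp_nonneg _) hwnn)]
      calc Real.exp (-(γ * (t - s)) / 2) * wnorm d (h s) ≤ wnorm d (h s) :=
            mul_le_of_le_one_left hwnn he
        _ ≤ max Mt 0 := hws.trans (le_max_left _ _)
  have hJnn : 0 ≤ J := by
    rw [hJ]
    apply intervalIntegral.integral_nonneg ht
    intro s hs
    exact mul_nonneg (Real.exp_nonneg _) (wnorm_nonneg d (h s) (hbd s hs.1))
  have hmain : ∀ x : Fin d → ℤ, wt d x * |duhamelField d KC KS f g h t x|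
      ≤ A * Real.exp (-(γ * t) / 2) * (wnorm d f + wnorm d g) + A * J := by
    intro x
    have hx := wt_pos d x
    have hT1 := kernel_sum d hd x (KC t) f (B * Real.exp (-(γ * t) / 2)) (wnorm d f)
      (by positivity) hwf (fun z => hKC t ht z) (abs_le_wnorm d f hf)
    have hT2 := kernel_sum d hd x (KS t) g (B * Real.exp (-(γ * t) / 2)) (wnorm d g)
      (by positivity) hwg (fun z => hKS t ht z) (abs_le_wnorm d g hg)
    have hT3 : |∫ s in (0:ℝ)..t, ∑' y : Fin d → ℤ, KS (t - s) (x - y) * h s y|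
        ≤ A * (wt d x)⁻¹ * J := by
      have hb : ∀ᵐ s ∂(MeasureTheory.volume.restrict (Set.uIoc (0:ℝ) t)),
          ‖∑' y : Fin d → ℤ, KS (t - s) (x - y) * h s y‖
            ≤ (A * (wt d x)⁻¹) * (Real.exp (-(γ * (t - s)) / 2) * wnorm d (h s)) := by
        rw [Set.uIoc_of_le ht]
        refine (MeasureTheory.ae_restrict_iff' measurableSet_Ioc).mpr (.of_forall fun s hs => ?_)
        have hs0 : 0 ≤ s := hs.1.le
        have hts : 0 ≤ t - s := by linarith [hs.2]
        have hk := kernel_sum d hd x (KS (t - s)) (h s) (B * Real.exp (-(γ * (t - s)) / 2))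
          (wnorm d (h s)) (by positivity) (wnorm_nonneg d (h s) (hbd s hs0))
          (fun z => hKS (t - s) hts z) (abs_le_wnorm d (h s) (hbd s hs0))
        rw [Real.norm_eq_abs]
        refine hk.trans (le_of_eq ?_)
        rw [hA]
        ring
      have hI := intervalIntegral.norm_integral_le_abs_of_norm_le hb
        (hintJ.const_mul (A * (wt d x)⁻¹))
      rw [intervalIntegral.integral_const_mul, Real.norm_eq_abs, ← hJ] at hI
      refine hI.trans (le_of_eq ?_)
      rw [abs_of_nonneg (mul_nonneg (mul_nonneg hApos.le (wt_inv_nonneg d x)) hJnn)]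
    calc wt d x * |duhamelField d KC KS f g h t x|
        ≤ wt d x * (|∑' y : Fin d → ℤ, KC t (x - y) * f y|
            + |∑' y : Fin d → ℤ, KS t (x - y) * g y|
            + |∫ s in (0:ℝ)..t, ∑' y : Fin d → ℤ, KS (t - s) (x - y) * h s y|) := by
          apply mul_le_mul_of_nonneg_left _ hx.le
          exact abs_add_three _ _ _
      _ ≤ wt d x * ((B * Real.exp (-(γ * t) / 2)) * wnorm d f * (2 ^ (d + 2) * S) * (wt d x)⁻¹
            + (B * Real.exp (-(γ * t) / 2)) * wnorm d g * (2 ^ (d + 2) * S) * (wt d x)⁻¹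
            + A * (wt d x)⁻¹ * J) := by
          apply mul_le_mul_of_nonneg_left _ hx.le
          exact add_le_add (add_le_add hT1 hT2) hT3
      _ = A * Real.exp (-(γ * t) / 2) * (wnorm d f + wnorm d g) + A * J := by
          rw [hA]
          field_simp
  refine ⟨?_, ?_⟩
  · exact ciSup_le hmain
  · intro x
    have hbdd : BddAbove (Set.range fun x : Fin d → ℤ =>
        wt d x * |duhamelField d KC KS f g h t x|) := by
      refine ⟨A * Real.exp (-(γ * t) / 2) * (wnorm d f + wnorm d g) + A * J, ?_⟩
      rintro _ ⟨x, rfl⟩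
      exact hmain x
    exact abs_le_wnorm d _ hbdd x
end
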